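/- For α ∈ [1/2, 1] and almost every irrational x ∈ (0,1), writing (x̄_k, ȳ_k) = 𝐓_α^k(x_0, y_0) for k ≥ 1: θ̄_k = 1/(x̄_k − ȳ_k), and θ̄_{k+1} = −x̄_k ȳ_k/(x̄_k − ȳ_k) if (x̄_k, ȳ_k) ∉ Ω_α^−, while θ̄_{k+1} = (1 − x̄_k)(1 − ȳ_k)/(x̄_k − ȳ_k) if (x̄_k, ȳ_k) ∈ Ω_α^−; that is, 𝐅(𝐓_α^k(x_0, y_0)) = (θ̄_k, θ̄_{k+1}). -/

import Mathlib

open Real MeasureTheory Filter Set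
open scoped Classical

noncomputable section

/-- The Gauss map `T x = 1/x - ⌊1/x⌋`. -/
def gaussMap (x : ℝ) : ℝ := 1/x - ⌊1/x⌋

/-- The natural extension `𝐓(x,y) = (1/x - ⌊1/x⌋, 1/y - ⌊1/x⌋)`. -/
def natExt (p : ℝ × ℝ) : ℝ × ℝ := (1/p.1 - ⌊1/p.1⌋, 1/p.2 - ⌊1/p.1⌋)

/-- `(x₀, y₀) = 𝐓(x, ∞) = (1/x - ⌊1/x⌋, -⌊1/x⌋)`. -/
def initPt (x : ℝ) : ℝ × ℝ := (1/x - ⌊1/x⌋, -(⌊1/x⌋ : ℝ))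

/-- Partial quotient `a_n = ⌊1 / T^{n-1} x⌋` (indexed from 1). -/
def cfA (x : ℝ) (n : ℕ) : ℤ := ⌊1 / (gaussMap^[n-1] x)⌋

/-- The pair `(p_n, q_n)` of numerator and denominator of the `n`-th convergent. -/
def pq (x : ℝ) : ℕ → ℤ × ℤ
  | 0 => (0, 1)
  | 1 => (1, ⌊1/x⌋)
  | n+2 => (cfA x (n+2) * (pq x (n+1)).1 + (pq x n).1,
            cfA x (n+2) * (pq x (n+1)).2 + (pq x n).2)

def pconv (x : ℝ) (n : ℕ) : ℤ := (pq x n).1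
def qconv (x : ℝ) (n : ℕ) : ℤ := (pq x n).2

/-- `θ_n(x) = q_n |q_n x - p_n|`. -/
def theta (x : ℝ) (n : ℕ) : ℝ := (qconv x n : ℝ) * |(qconv x n : ℝ) * x - (pconv x n : ℝ)|

/-- `Ω = (0,1) × (-∞,-1)`. -/
def Ωset : Set (ℝ × ℝ) := Set.Ioo (0:ℝ) 1 ×ˢ Set.Iio (-1 : ℝ)

/-- `Ω_α = {(x,y) ∈ Ω : 1/(x-y) < α}`. -/
def Ωα (α : ℝ) : Set (ℝ × ℝ) := {p ∈ Ωset | 1 / (p.1 - p.2) < α}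

/-- First return time to `Ω_α` (defined as `sInf`, so `0` when undefined). -/
def tauα (α : ℝ) (p : ℝ × ℝ) : ℕ := sInf {n : ℕ | 1 ≤ n ∧ natExt^[n] p ∈ Ωα α}

/-- First return map `𝐓_α`. -/
def retMap (α : ℝ) (p : ℝ × ℝ) : ℝ × ℝ := natExt^[tauα α p] p

/-- The invariant measure `μ` with density `(log 2)⁻¹ (x-y)⁻²` on `Ω`. -/
def μnat : Measure (ℝ × ℝ) :=
  (volume.restrict Ωset).withDensity
    (fun p => ENNReal.ofReal ((Real.log 2)⁻¹ * ((p.1 - p.2)⁻¹)^2))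

/-- `c_α = (log 2 · μ(Ω_α))⁻¹`, explicitly. -/
def cα (α : ℝ) : ℝ := if 1/2 < α then (1 - α + Real.log 2 + Real.log α)⁻¹ else α⁻¹

/-- The probability measure `μ_α` with density `c_α (x-y)⁻²` on `Ω_α`. -/
def μmeas (α : ℝ) : Measure (ℝ × ℝ) :=
  (volume.restrict (Ωα α)).withDensity
    (fun p => ENNReal.ofReal (cα α * ((p.1 - p.2)⁻¹)^2))

/-- `Ω_α⁻ = {(x,y) ∈ Ω : α < x, y < αx/(α-x)}`. -/
def Ωminus (α : ℝ) : Set (ℝ × ℝ) := {p ∈ Ωset | α < p.1 ∧ p.2 < α * p.1 / (α - p.1)}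


section Core

variable {x : ℝ}

lemma gaussMap_mem (hx : x ∈ Set.Ioo (0:ℝ) 1) (hirr : Irrational x) :
    gaussMap x ∈ Set.Ioo (0:ℝ) 1 ∧ Irrational (gaussMap x) := by
  have hx0 : (0:ℝ) < x := hx.1
  have hinv : Irrational (1/x) := by
    rw [one_div]; exact hirr.inv
  have hfr : gaussMap x = Int.fract (1/x) := rfl
  have hirr' : Irrational (gaussMap x) := by
    rw [hfr, Int.fract]; exact hinv.sub_intCast _
  refine ⟨⟨?_, ?_⟩, hirr'⟩
  · rcases lt_or_eq_of_le (Int.fract_nonneg (1/x)) with h | h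
    · rw [hfr]; exact h
    · exfalso; exact hirr' (by rw [hfr, ← h]; exact ⟨0, by norm_num⟩)
  · rw [hfr]; exact Int.fract_lt_one _

/-- iterates of the Gauss map stay irrational in (0,1) -/
lemma xiter_mem (hx : x ∈ Set.Ioo (0:ℝ) 1) (hirr : Irrational x) (n : ℕ) :
    gaussMap^[n] x ∈ Set.Ioo (0:ℝ) 1 ∧ Irrational (gaussMap^[n] x) := by
  induction n with
  | zero => exact ⟨hx, hirr⟩
  | succ n ih =>
    rw [Function.iterate_succ_apply']
    exact gaussMap_mem ih.1 ih.2

lemma one_lt_inv_xiter (hx : x ∈ Set.Ioo (0:ℝ) 1) (hirr : Irrational x) (n : ℕ) :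
    1 < 1 / gaussMap^[n] x := by
  obtain ⟨⟨h0, h1⟩, -⟩ := xiter_mem hx hirr n
  rw [lt_div_iff₀ h0]; linarith

lemma cfA_pos (hx : x ∈ Set.Ioo (0:ℝ) 1) (hirr : Irrational x) (n : ℕ) :
    1 ≤ cfA x (n+1) := by
  have := one_lt_inv_xiter hx hirr n
  have : (1:ℝ) ≤ 1 / gaussMap^[n] x := le_of_lt this
  unfold cfA
  simp only [Nat.add_sub_cancel]
  exact_mod_cast Int.le_floor.2 (by exact_mod_cast this)

lemma xiter_succ (hx : x ∈ Set.Ioo (0:ℝ) 1) (n : ℕ) :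
    gaussMap^[n+1] x = 1 / gaussMap^[n] x - cfA x (n+1) := by
  rw [Function.iterate_succ_apply']
  simp only [gaussMap, cfA, Nat.add_sub_cancel]

end Core

def epsA (x : ℝ) (n : ℕ) : ℝ := (qconv x n : ℝ) * x - (pconv x n : ℝ)

section Core2

variable {x : ℝ}

lemma pconv_zero : pconv x 0 = 0 := rfl
lemma qconv_zero : qconv x 0 = 1 := rfl
lemma pconv_one : pconv x 1 = 1 := rfl
lemma qconv_one : qconv x 1 = ⌊1/x⌋ := rfl
lemma cfA_one : cfA x 1 = ⌊1/x⌋ := by simp [cfA]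
lemma pconv_rec (n : ℕ) : pconv x (n+2) = cfA x (n+2) * pconv x (n+1) + pconv x n := rfl
lemma qconv_rec (n : ℕ) : qconv x (n+2) = cfA x (n+2) * qconv x (n+1) + qconv x n := rfl

lemma qconv_facts (hx : x ∈ Set.Ioo (0:ℝ) 1) (hirr : Irrational x) (n : ℕ) :
    0 < qconv x n ∧ qconv x n ≤ qconv x (n+1) ∧ (1 ≤ n → qconv x n < qconv x (n+1)) := by
  induction n with
  | zero =>
    refine ⟨by norm_num [qconv_zero], ?_, by omega⟩
    rw [qconv_zero, qconv_one, ← cfA_one]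
    exact cfA_pos hx hirr 0
  | succ n ih =>
    obtain ⟨h0, h1, -⟩ := ih
    have hq1 : 0 < qconv x (n+1) := lt_of_lt_of_le h0 h1
    have ha : 1 ≤ cfA x (n+2) := cfA_pos hx hirr (n+1)
    have : qconv x (n+1) < qconv x (n+2) := by
      rw [qconv_rec]; nlinarith
    exact ⟨hq1, le_of_lt this, fun _ => this⟩

lemma qconv_pos (hx : x ∈ Set.Ioo (0:ℝ) 1) (hirr : Irrational x) (n : ℕ) :
    0 < qconv x n := (qconv_facts hx hirr n).1

lemma qconv_lt (hx : x ∈ Set.Ioo (0:ℝ) 1) (hirr : Irrational x) {n : ℕ} (hn : 1 ≤ n) :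
    qconv x n < qconv x (n+1) := (qconv_facts hx hirr n).2.2 hn

lemma epsA_rec (hx : x ∈ Set.Ioo (0:ℝ) 1) (hirr : Irrational x) (n : ℕ) :
    epsA x (n+1) = -(gaussMap^[n+1] x) * epsA x n := by
  induction n with
  | zero =>
    have hx0 : x ≠ 0 := ne_of_gt hx.1
    have h1 : gaussMap^[1] x = 1/x - ⌊1/x⌋ := by simp [gaussMap]
    simp only [epsA, zero_add, pconv_one, qconv_one, pconv_zero, qconv_zero, h1]
    push_cast
    field_simp
    ring
  | succ n ih =>
    have hxn : gaussMap^[n+1] x ≠ 0 := ne_of_gt (xiter_mem hx hirr (n+1)).1.1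
    have hrec : epsA x (n+2) = (cfA x (n+2) : ℝ) * epsA x (n+1) + epsA x n := by
      simp only [epsA, pconv_rec, qconv_rec]; push_cast; ring
    have hxs : gaussMap^[n+2] x = 1 / gaussMap^[n+1] x - cfA x (n+2) :=
      xiter_succ hx (n+1)
    have hxn' : gaussMap^[n] (gaussMap x) ≠ 0 := by
      rw [← Function.iterate_succ_apply]; exact hxn
    rw [hrec, hxs, ih]
    field_simp [hxn']
    ring

lemma det_eq (n : ℕ) :
    pconv x (n+1) * qconv x n - pconv x n * qconv x (n+1) = (-1)^n := by
  induction n with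
  | zero => simp [pconv_zero, qconv_zero, pconv_one]
  | succ n ih =>
    rw [pconv_rec, qconv_rec, pow_succ]
    linear_combination (-1 : ℤ) * ih

lemma key_eq (hx : x ∈ Set.Ioo (0:ℝ) 1) (hirr : Irrational x) (n : ℕ) :
    epsA x n * ((qconv x (n+1) : ℝ) + (qconv x n : ℝ) * gaussMap^[n+1] x) = (-1)^n := by
  have h1 := epsA_rec hx hirr n
  have h2 := det_eq (x := x) n
  have h2' : (pconv x (n+1) : ℝ) * qconv x n - pconv x n * qconv x (n+1) = (-1)^n := by
    exact_mod_cast congrArg (Int.cast : ℤ → ℝ) h2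
  simp only [epsA] at h1 ⊢
  linear_combination (qconv x n : ℝ) * h1 + h2'

end Core2

def Dden (x : ℝ) (n : ℕ) : ℝ := (qconv x (n+1) : ℝ) + (qconv x n : ℝ) * gaussMap^[n+1] x

section Core3

variable {x : ℝ}

lemma Dden_pos (hx : x ∈ Set.Ioo (0:ℝ) 1) (hirr : Irrational x) (n : ℕ) :
    0 < Dden x n := by
  have h1 : (0:ℝ) < qconv x (n+1) := by exact_mod_cast qconv_pos hx hirr (n+1)
  have h2 : (0:ℝ) < qconv x n := by exact_mod_cast qconv_pos hx hirr n
  have h3 := (xiter_mem hx hirr (n+1)).1.1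
  unfold Dden; positivity

lemma abs_epsA (hx : x ∈ Set.Ioo (0:ℝ) 1) (hirr : Irrational x) (n : ℕ) :
    |epsA x n| = 1 / Dden x n := by
  have hk := key_eq hx hirr n
  have hD := Dden_pos hx hirr n
  have : |epsA x n * Dden x n| = 1 := by
    rw [show epsA x n * ((qconv x (n+1) : ℝ) + (qconv x n : ℝ) * gaussMap^[n+1] x)
        = epsA x n * Dden x n from rfl] at hk
    rw [hk, abs_pow, abs_neg, abs_one, one_pow]
  rw [abs_mul, abs_of_pos hD] at this
  field_simp
  linarith [this]

lemma theta_eq_abs (n : ℕ) : theta x n = (qconv x n : ℝ) * |epsA x n| := rfl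

lemma theta_eq (hx : x ∈ Set.Ioo (0:ℝ) 1) (hirr : Irrational x) (n : ℕ) :
    theta x n = (qconv x n : ℝ) / Dden x n := by
  rw [theta_eq_abs, abs_epsA hx hirr n]; ring

lemma theta_pos (hx : x ∈ Set.Ioo (0:ℝ) 1) (hirr : Irrational x) (n : ℕ) :
    0 < theta x n := by
  rw [theta_eq hx hirr n]
  have h1 : (0:ℝ) < qconv x n := by exact_mod_cast qconv_pos hx hirr n
  exact div_pos h1 (Dden_pos hx hirr n)

lemma theta_succ_eq (hx : x ∈ Set.Ioo (0:ℝ) 1) (hirr : Irrational x) (n : ℕ) :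
    theta x (n+1) = (qconv x (n+1) : ℝ) * gaussMap^[n+1] x / Dden x n := by
  have hx1 := (xiter_mem hx hirr (n+1)).1.1
  rw [theta_eq_abs, epsA_rec hx hirr n, abs_mul, abs_neg,
    abs_of_pos hx1, abs_epsA hx hirr n]
  ring

lemma theta_succ2_eq (hx : x ∈ Set.Ioo (0:ℝ) 1) (hirr : Irrational x) (n : ℕ)
    (ha : cfA x (n+2) = 1) :
    theta x (n+2) = (1 - gaussMap^[n+1] x) * ((qconv x n : ℝ) + (qconv x (n+1) : ℝ))
      / Dden x n := by
  have hx1 := (xiter_mem hx hirr (n+1)).1.1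
  have hx2 := (xiter_mem hx hirr (n+2)).1.1
  have hxn1 : gaussMap^[n+1] x ≠ 0 := ne_of_gt hx1
  have hq : (qconv x (n+2) : ℝ) = (qconv x (n+1) : ℝ) + (qconv x n : ℝ) := by
    rw [qconv_rec, ha]; push_cast; ring
  have hxs : gaussMap^[n+2] x = 1 / gaussMap^[n+1] x - 1 := by
    rw [xiter_succ hx (n+1), ha]; norm_num
  rw [theta_eq_abs, epsA_rec hx hirr (n+1), abs_mul, abs_neg, abs_of_pos hx2,
    epsA_rec hx hirr n, abs_mul, abs_neg, abs_of_pos hx1, abs_epsA hx hirr n, hq, hxs]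
  have hD := Dden_pos hx hirr n
  set u := gaussMap^[n+1] x with hu
  field_simp
  ring

lemma orbit_eq (hx : x ∈ Set.Ioo (0:ℝ) 1) (hirr : Irrational x) (n : ℕ) :
    natExt^[n] (initPt x) = (gaussMap^[n+1] x, -((qconv x (n+1) : ℝ) / (qconv x n : ℝ))) := by
  induction n with
  | zero =>
    simp only [Function.iterate_zero, id_eq, initPt]
    have : gaussMap^[0+1] x = 1/x - ⌊1/x⌋ := by simp [gaussMap]
    rw [this, qconv_one, qconv_zero]
    norm_num
  | succ n ih =>
    have hq1 : (0:ℝ) < qconv x (n+1) := by exact_mod_cast qconv_pos hx hirr (n+1)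
    have hq0 : (0:ℝ) < qconv x n := by exact_mod_cast qconv_pos hx hirr n
    have hx1 := (xiter_mem hx hirr (n+1)).1
    rw [Function.iterate_succ_apply', ih]
    unfold natExt
    have hfl : ⌊1 / gaussMap^[n+1] x⌋ = cfA x (n+2) := rfl
    simp only [Prod.mk.injEq]
    constructor
    · rw [hfl, ← xiter_succ hx (n+1)]
    · rw [hfl, qconv_rec]
      push_cast
      have hq0' : (qconv x n : ℝ) ≠ 0 := ne_of_gt hq0
      have hq1' : (qconv x (n+1) : ℝ) ≠ 0 := ne_of_gt hq1
      set A := (qconv x n : ℝ) with hA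
      set B := (qconv x (n+1) : ℝ) with hB
      set C := (cfA x (n+2) : ℝ) with hC
      field_simp
      ring

end Core3

section Core4

variable {x : ℝ}

lemma sub_coords (hx : x ∈ Set.Ioo (0:ℝ) 1) (hirr : Irrational x) (n : ℕ) :
    (natExt^[n] (initPt x)).1 - (natExt^[n] (initPt x)).2
      = Dden x n / (qconv x n : ℝ) := by
  rw [orbit_eq hx hirr n]
  have hq0 : (0:ℝ) < qconv x n := by exact_mod_cast qconv_pos hx hirr n
  simp only [Dden]
  field_simp
  ring

lemma theta_inv_eq (hx : x ∈ Set.Ioo (0:ℝ) 1) (hirr : Irrational x) (n : ℕ) :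
    1 / ((natExt^[n] (initPt x)).1 - (natExt^[n] (initPt x)).2) = theta x n := by
  rw [sub_coords hx hirr n, theta_eq hx hirr n, one_div_div]

lemma Fplus_eq (hx : x ∈ Set.Ioo (0:ℝ) 1) (hirr : Irrational x) (n : ℕ) :
    -(natExt^[n] (initPt x)).1 * (natExt^[n] (initPt x)).2
      / ((natExt^[n] (initPt x)).1 - (natExt^[n] (initPt x)).2) = theta x (n+1) := by
  rw [sub_coords hx hirr n, orbit_eq hx hirr n, theta_succ_eq hx hirr n]
  have hq0 : (0:ℝ) < qconv x n := by exact_mod_cast qconv_pos hx hirr n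
  have hD := Dden_pos hx hirr n
  field_simp

lemma Fminus_eq (hx : x ∈ Set.Ioo (0:ℝ) 1) (hirr : Irrational x) (n : ℕ)
    (ha : cfA x (n+2) = 1) :
    (1 - (natExt^[n] (initPt x)).1) * (1 - (natExt^[n] (initPt x)).2)
      / ((natExt^[n] (initPt x)).1 - (natExt^[n] (initPt x)).2) = theta x (n+2) := by
  rw [sub_coords hx hirr n, orbit_eq hx hirr n, theta_succ2_eq hx hirr n ha]
  have hq0 : (0:ℝ) < qconv x n := by exact_mod_cast qconv_pos hx hirr n
  have hD := Dden_pos hx hirr n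
  field_simp
  try ring

lemma mem_Omega (hx : x ∈ Set.Ioo (0:ℝ) 1) (hirr : Irrational x) {n : ℕ} (hn : 1 ≤ n) :
    natExt^[n] (initPt x) ∈ Ωset := by
  rw [orbit_eq hx hirr n]
  have hq0 : (0:ℝ) < qconv x n := by exact_mod_cast qconv_pos hx hirr n
  have hlt : (qconv x n : ℝ) < qconv x (n+1) := by exact_mod_cast qconv_lt hx hirr hn
  constructor
  · exact (xiter_mem hx hirr (n+1)).1
  · simp only [Set.mem_Iio]
    rw [neg_lt, neg_neg, lt_div_iff₀ hq0]
    linarith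

lemma mem_Ωα_iff (hx : x ∈ Set.Ioo (0:ℝ) 1) (hirr : Irrational x) (α : ℝ) {n : ℕ}
    (hn : 1 ≤ n) :
    natExt^[n] (initPt x) ∈ Ωα α ↔ theta x n < α := by
  unfold Ωα
  rw [Set.mem_setOf_eq, theta_inv_eq hx hirr n]
  simp [mem_Omega hx hirr hn]

end Core4

section Core5

variable {x α : ℝ}

lemma theta_sum_lt_one (hx : x ∈ Set.Ioo (0:ℝ) 1) (hirr : Irrational x) {n : ℕ}
    (hn : 1 ≤ n) : theta x n + theta x (n+1) < 1 := by
  rw [theta_eq hx hirr n, theta_succ_eq hx hirr n]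
  have hD := Dden_pos hx hirr n
  have hlt : (qconv x n : ℝ) < qconv x (n+1) := by exact_mod_cast qconv_lt hx hirr hn
  obtain ⟨hx0, hx1⟩ := (xiter_mem hx hirr (n+1)).1
  rw [← add_div, div_lt_one hD]
  simp only [Dden]
  nlinarith

lemma S_infinite (hx : x ∈ Set.Ioo (0:ℝ) 1) (hirr : Irrational x) (hα : 1/2 ≤ α) :
    {n : ℕ | 1 ≤ n ∧ theta x n < α}.Infinite := by
  apply Set.infinite_of_not_bddAbove
  rintro ⟨b, hb⟩
  have key : ∀ n : ℕ, 1 ≤ n → theta x n < α ∨ theta x (n+1) < α := by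
    intro n hn
    by_contra hcon
    push_neg at hcon
    have := theta_sum_lt_one hx hirr hn
    linarith [hcon.1, hcon.2]
  rcases key (b+1) (by omega) with h | h
  · exact absurd (hb ⟨by omega, h⟩) (by omega)
  · exact absurd (hb (Set.mem_setOf_eq ▸ ⟨by omega, h⟩ : b+2 ∈ _)) (by omega)

/-- characterization of `Nat.nth p (k+1)` -/
lemma nth_succ_eq_of {p : ℕ → Prop} (hp : (setOf p).Infinite) {k m : ℕ}
    (hm : p m) (hlt : Nat.nth p k < m)
    (hmid : ∀ j, Nat.nth p k < j → j < m → ¬ p j) : Nat.nth p (k+1) = m := by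
  rcases lt_trichotomy (Nat.nth p (k+1)) m with h | h | h
  · exfalso
    have h1 : Nat.nth p k < Nat.nth p (k+1) := (Nat.nth_lt_nth hp).2 (Nat.lt_succ_self k)
    exact hmid _ h1 h (Nat.nth_mem_of_infinite hp (k+1))
  · exact h
  · exfalso
    have := Nat.le_nth_of_lt_nth_succ h hm
    omega

lemma nth_zero_eq_of {p : ℕ → Prop} {m : ℕ} (hm : p m)
    (hmid : ∀ j, j < m → ¬ p j) : Nat.nth p 0 = m := by
  rw [Nat.nth_zero]
  have h1 : sInf (setOf p) ≤ m := Nat.sInf_le hm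
  rcases lt_or_eq_of_le h1 with h | h
  · exact absurd (Nat.sInf_mem (Set.nonempty_of_mem hm)) (hmid _ h)
  · exact h

/-- return map step -/
lemma retMap_step (hx : x ∈ Set.Ioo (0:ℝ) 1) (hirr : Irrational x) {n m : ℕ}
    (hnm : n < m) (hm1 : 1 ≤ m) (hm : theta x m < α)
    (hmid : ∀ j, n < j → j < m → ¬ (1 ≤ j ∧ theta x j < α)) :
    retMap α (natExt^[n] (initPt x)) = natExt^[m] (initPt x) := by
  have hiter : ∀ t : ℕ, natExt^[t] (natExt^[n] (initPt x)) = natExt^[t + n] (initPt x) :=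
    fun t => (Function.iterate_add_apply natExt t n (initPt x)).symm
  have hmem : ∀ t : ℕ, 1 ≤ t →
      (natExt^[t] (natExt^[n] (initPt x)) ∈ Ωα α ↔ theta x (t + n) < α) := by
    intro t ht
    rw [hiter t]
    exact mem_Ωα_iff hx hirr α (by omega)
  have htau : tauα α (natExt^[n] (initPt x)) = m - n := by
    have hmem' : (m - n) ∈ {t : ℕ | 1 ≤ t ∧ natExt^[t] (natExt^[n] (initPt x)) ∈ Ωα α} := by
      refine ⟨by omega, ?_⟩
      rw [hmem (m - n) (by omega)]
      rwa [show m - n + n = m by omega]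
    unfold tauα
    refine le_antisymm (Nat.sInf_le hmem') ?_
    by_contra hcon
    push_neg at hcon
    have hne := Nat.sInf_mem (Set.nonempty_of_mem hmem')
    set t := sInf {t : ℕ | 1 ≤ t ∧ natExt^[t] (natExt^[n] (initPt x)) ∈ Ωα α} with ht
    obtain ⟨ht1, ht2⟩ := hne
    rw [hmem t ht1] at ht2
    exact hmid (t + n) (by omega) (by omega) ⟨by omega, ht2⟩
  rw [retMap, htau, hiter, show m - n + n = m by omega]

/-- iterates of the return map land on orbit points indexed by `Nat.nth` -/
lemma retMap_iterate (hx : x ∈ Set.Ioo (0:ℝ) 1) (hirr : Irrational x) (hα : 1/2 ≤ α)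
    (k : ℕ) :
    (retMap α)^[k+1] (initPt x)
      = natExt^[Nat.nth (fun n => 1 ≤ n ∧ theta x n < α) k] (initPt x) := by
  have hinf := S_infinite hx hirr hα
  have hinf' : (setOf fun n => 1 ≤ n ∧ theta x n < α).Infinite := hinf
  induction k with
  | zero =>
    have hm := Nat.nth_mem_of_infinite hinf' 0
    rw [Function.iterate_one]
    have : initPt x = natExt^[0] (initPt x) := rfl
    rw [this]
    exact retMap_step hx hirr (by omega : 0 < Nat.nth _ 0) hm.1 hm.2
      (fun j hj1 hj2 hSj => by
        have : Nat.nth (fun n => 1 ≤ n ∧ theta x n < α) 0 ≤ j := by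
          rw [Nat.nth_zero]; exact Nat.sInf_le hSj
        omega)
  | succ k ih =>
    rw [Function.iterate_succ_apply', ih]
    have hm := Nat.nth_mem_of_infinite hinf' (k+1)
    have hlt : Nat.nth (fun n => 1 ≤ n ∧ theta x n < α) k
        < Nat.nth (fun n => 1 ≤ n ∧ theta x n < α) (k+1) :=
      (Nat.nth_lt_nth hinf').2 (Nat.lt_succ_self k)
    exact retMap_step hx hirr hlt hm.1 hm.2
      (fun j hj1 hj2 hSj => by
        have := Nat.le_nth_of_lt_nth_succ hj2 hSj
        omega)

end Core5

lemma bad_countable (α : ℝ) (hα : 0 < α) :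
    {x : ℝ | ∃ p q : ℤ, 0 < q ∧ (q:ℝ) * |(q:ℝ) * x - (p:ℝ)| = α}.Countable := by
  have hsub : {x : ℝ | ∃ p q : ℤ, 0 < q ∧ (q:ℝ) * |(q:ℝ) * x - (p:ℝ)| = α}
      ⊆ ⋃ (pr : ℤ × ℤ), ({((pr.1:ℝ) + α/pr.2)/pr.2, ((pr.1:ℝ) - α/pr.2)/pr.2} : Set ℝ) := by
    rintro y ⟨p, q, hq, heq⟩
    refine Set.mem_iUnion.2 ⟨(p, q), ?_⟩
    have hq0 : (0:ℝ) < q := by exact_mod_cast hq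
    have hq0' : (q:ℝ) ≠ 0 := ne_of_gt hq0
    have habs : |(q:ℝ)*y - p| = α / q := by
      rw [eq_div_iff hq0']; linarith [heq]
    rcases (abs_eq (le_of_lt (div_pos hα hq0))).1 habs with h | h
    · left
      have hh : (q:ℝ)*((q:ℝ)*y - p) = α := by rw [h]; field_simp
      field_simp
      linear_combination hh
    · right
      have hh : (q:ℝ)*((q:ℝ)*y - p) = -α := by rw [h]; field_simp
      rw [Set.mem_singleton_iff]
      field_simp
      linear_combination hh
  exact Set.Countable.mono hsub
    (Set.countable_iUnion (fun pr =>
      ((Set.finite_singleton _).insert _).countable))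

/-- for `α ∈ [1/2,1]` and a.e. irrational `x ∈ (0,1)`, writing
`(x̄_k, ȳ_k) = 𝐓_α^k(x₀,y₀)`: `θ̄_k = 1/(x̄_k - ȳ_k)` and `θ̄_{k+1} = F⁻(x̄_k,ȳ_k)` if
`(x̄_k,ȳ_k) ∈ Ω_α⁻`, `θ̄_{k+1} = F⁺(x̄_k,ȳ_k)` otherwise (here `Nat.nth P k = n_{k+1}` and
`(retMap α)^[k+1]` is the `(k+1)`-st iterate). -/
theorem stmt_15 (α : ℝ) (hα : α ∈ Set.Icc (1/2:ℝ) 1) :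
    ∀ᵐ x : ℝ, x ∈ Set.Ioo (0:ℝ) 1 → Irrational x →
      ∀ k : ℕ,
        theta x (Nat.nth (fun n => 1 ≤ n ∧ theta x n < α) k) =
          1 / (((retMap α)^[k+1] (initPt x)).1 - ((retMap α)^[k+1] (initPt x)).2) ∧
        theta x (Nat.nth (fun n => 1 ≤ n ∧ theta x n < α) (k+1)) =
          (if (retMap α)^[k+1] (initPt x) ∈ Ωminus α then
            (1 - ((retMap α)^[k+1] (initPt x)).1) * (1 - ((retMap α)^[k+1] (initPt x)).2) /
              (((retMap α)^[k+1] (initPt x)).1 - ((retMap α)^[k+1] (initPt x)).2)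
           else
            -((retMap α)^[k+1] (initPt x)).1 * ((retMap α)^[k+1] (initPt x)).2 /
              (((retMap α)^[k+1] (initPt x)).1 - ((retMap α)^[k+1] (initPt x)).2)) := by
  have hα1 : 1/2 ≤ α := hα.1
  have hα0 : (0:ℝ) < α := by linarith
  have hBnull : volume {x : ℝ | ∃ p q : ℤ, 0 < q ∧ (q:ℝ) * |(q:ℝ) * x - (p:ℝ)| = α} = 0 :=
    (bad_countable α hα0).measure_zero _
  filter_upwards [measure_eq_zero_iff_ae_notMem.mp hBnull] with x hxB hx hirr
  have hB' : ∀ n : ℕ, theta x n ≠ α := by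
    intro n hcon
    exact hxB ⟨pconv x n, qconv x n, qconv_pos hx hirr n, hcon⟩
  intro k
  have hinf' : (setOf fun n => 1 ≤ n ∧ theta x n < α).Infinite := S_infinite hx hirr hα1
  set m := Nat.nth (fun n => 1 ≤ n ∧ theta x n < α) k with hm
  have hmS : 1 ≤ m ∧ theta x m < α := Nat.nth_mem_of_infinite hinf' k
  have hret := retMap_iterate hx hirr hα1 k
  rw [← hm] at hret
  rw [hret]
  set P := natExt^[m] (initPt x) with hP
  have hPΩ : P ∈ Ωset := mem_Omega hx hirr hmS.1
  rw [Ωset, Set.mem_prod] at hPΩ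
  obtain ⟨⟨hx0, hx1⟩, hy⟩ := hPΩ
  rw [Set.mem_Iio] at hy
  have hsub : 0 < P.1 - P.2 := by linarith
  constructor
  · exact (theta_inv_eq hx hirr m).symm
  · by_cases hc : P ∈ Ωminus α
    · rw [if_pos hc]
      obtain ⟨-, hcx, hcy⟩ := hc
      have hax : α - P.1 < 0 := by linarith
      rw [lt_div_iff_of_neg hax] at hcy
      -- hcy : α * P.1 < P.2 * (α - P.1)
      have hF : α < theta x (m+1) := by
        rw [← Fplus_eq hx hirr m, lt_div_iff₀ hsub]
        nlinarith
      have hP1 : P.1 = gaussMap^[m+1] x := by rw [hP, orbit_eq hx hirr m]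
      have ha : cfA x (m+2) = 1 := by
        have h1 : (1:ℝ) ≤ 1 / gaussMap^[m+1] x := by
          rw [le_div_iff₀ (by rw [← hP1]; exact hx0)]
          rw [← hP1]; linarith
        have h2 : 1 / gaussMap^[m+1] x < 2 := by
          rw [div_lt_iff₀ (by rw [← hP1]; exact hx0)]
          rw [← hP1]; linarith
        have : ⌊1 / gaussMap^[m+1] x⌋ = 1 := by
          have h1' : ((1:ℤ):ℝ) ≤ 1 / gaussMap^[m+1] x := by exact_mod_cast h1
          have h2' : 1 / gaussMap^[m+1] x < ((1:ℤ):ℝ) + 1 := by push_cast; linarith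
          exact Int.floor_eq_iff.mpr ⟨h1', h2'⟩
        rw [show cfA x (m+2) = ⌊1 / gaussMap^[m+1] x⌋ from rfl, this]
      have hF2 : theta x (m+2) < α := by
        rw [← Fminus_eq hx hirr m ha, div_lt_iff₀ hsub]
        have hpos : 0 < P.2 * (α - P.1) - α * P.1 := by linarith
        have hxa1 : 0 < P.1 + α - 1 := by linarith
        nlinarith [mul_pos hpos hxa1, sq_nonneg (2*P.1 - 1),
          mul_nonneg (show (0:ℝ) ≤ 2*α - 1 by linarith) (sq_nonneg (2*P.1 - 1)),
          mul_pos (show (0:ℝ) < P.1 - α by linarith) hsub]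
      have hnth : Nat.nth (fun n => 1 ≤ n ∧ theta x n < α) (k+1) = m + 2 := by
        refine nth_succ_eq_of hinf' ⟨by omega, hF2⟩ (by omega) ?_
        intro j hj1 hj2 hSj
        have : j = m + 1 := by omega
        subst this
        exact absurd hSj.2 (not_lt.2 (le_of_lt hF))
      rw [hnth]
      exact (Fminus_eq hx hirr m ha).symm
    · rw [if_neg hc]
      have hc' : ¬(α < P.1 ∧ P.2 < α * P.1 / (α - P.1)) := by
        intro h
        exact hc ⟨⟨⟨hx0, hx1⟩, hy⟩, h⟩
      have hle : theta x (m+1) ≤ α := by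
        rw [← Fplus_eq hx hirr m, div_le_iff₀ hsub]
        rcases le_or_gt P.1 α with h | h
        · nlinarith
        · have h2 : α * P.1 / (α - P.1) ≤ P.2 := le_of_not_gt (fun hh => hc' ⟨h, hh⟩)
          have hax : α - P.1 < 0 := by linarith
          rw [div_le_iff_of_neg hax] at h2
          nlinarith
      have hFlt : theta x (m+1) < α := lt_of_le_of_ne hle (hB' (m+1))
      have hnth : Nat.nth (fun n => 1 ≤ n ∧ theta x n < α) (k+1) = m + 1 := by
        refine nth_succ_eq_of hinf' ⟨by omega, hFlt⟩ (by omega) ?_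
        intro j hj1 hj2 _
        omega
      rw [hnth]
      exact (Fplus_eq hx hirr m).symm
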